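/- Let V be the n-dimensional vector space over F2. If f : F2^n → {0,1} equals the linear functional x ↦ ⟨x,s⟩ on every point of a coset H = {x : Ax = r} (for A an m×n matrix over F2 and r ∈ F2^m, H nonempty), and E is a set of ℓ standard basis vectors such that fixing the coordinates of some x0 ∈ H on E forces f to be constant, then s + v lies in the span of the vectors of E for some v in the row space of A. In particular ℓ ≥ min{|s+v| : v ∈ row space of A}, where |·| is Hamming weight. -/

import Mathlib

open LinearMap (BilinForm)

/-- The standard dot-product bilinear form on `Fin n → ZMod 2`. -/
noncomputable def dotForm (n : ℕ) : BilinForm (ZMod 2) (Fin n → ZMod 2) :=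
  LinearMap.mk₂ (ZMod 2) (fun x y => ∑ i, x i * y i)
    (fun x x' y => by simp [add_mul, Finset.sum_add_distrib])
    (fun c x y => by simp [Finset.mul_sum, mul_assoc])
    (fun x y y' => by simp [mul_add, Finset.sum_add_distrib])
    (fun c x y => by
      simp [Finset.mul_sum]; apply Finset.sum_congr rfl; intros; ring)

lemma dotForm_apply {n : ℕ} (x y : Fin n → ZMod 2) :
    dotForm n x y = ∑ i, x i * y i := rfl

lemma dotForm_refl (n : ℕ) : (dotForm n).IsRefl := by
  intro x y h
  rw [dotForm_apply] at h ⊢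
  rw [← h]
  apply Finset.sum_congr rfl
  intros; ring

lemma dotForm_nondeg (n : ℕ) : (dotForm n).Nondegenerate := by
  refine (dotForm_refl n).nondegenerate_iff_separatingLeft.mpr ?_
  intro x hx
  funext i
  have := hx (Pi.single i 1)
  rw [dotForm_apply] at this
  simpa [Pi.single_apply, Finset.sum_ite_eq'] using this

lemma dotForm_orthogonal_sup (n : ℕ) (R W : Submodule (ZMod 2) (Fin n → ZMod 2)) :
    (dotForm n).orthogonal (R ⊔ W) =
      (dotForm n).orthogonal R ⊓ (dotForm n).orthogonal W := by
  apply le_antisymm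
  · exact le_inf (LinearMap.BilinForm.orthogonal_le le_sup_left)
      (LinearMap.BilinForm.orthogonal_le le_sup_right)
  · rintro x ⟨hxR, hxW⟩ y hy
    rcases Submodule.mem_sup.mp hy with ⟨a, ha, b, hb, rfl⟩
    have := hxR a ha
    have := hxW b hb
    rw [map_add, LinearMap.add_apply, ‹(dotForm n) a x = 0›, ‹(dotForm n) b x = 0›, add_zero]

theorem stmt0 {n m : ℕ} (f : (Fin n → ZMod 2) → ZMod 2) (s : Fin n → ZMod 2)
    (A : Matrix (Fin m) (Fin n) (ZMod 2)) (r : Fin m → ZMod 2)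
    (H : Set (Fin n → ZMod 2)) (hH : H = {x | A.mulVec x = r}) (hne : H.Nonempty)
    (hf : ∀ x ∈ H, f x = ∑ i, x i * s i)
    (x0 : Fin n → ZMod 2) (hx0 : x0 ∈ H)
    (E : Finset (Fin n)) (ℓ : ℕ) (hE : E.card = ℓ)
    (hcert : ∀ x', (∀ i ∈ E, x' i = x0 i) → f x' = f x0) :
    ∃ v ∈ Submodule.span (ZMod 2) (Set.range fun i => A i),
      s + v ∈ Submodule.span (ZMod 2) ((fun i => Pi.single i (1 : ZMod 2)) '' (E : Set (Fin n))) ∧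
        hammingNorm (s + v) ≤ ℓ := by
  classical
  set B := dotForm n
  set R : Submodule (ZMod 2) (Fin n → ZMod 2) :=
    Submodule.span (ZMod 2) (Set.range fun i => A i) with hR
  set W : Submodule (ZMod 2) (Fin n → ZMod 2) :=
    Submodule.span (ZMod 2) ((fun i => Pi.single i (1 : ZMod 2)) '' (E : Set (Fin n))) with hW
  -- key: s ∈ B.orthogonal (B.orthogonal (R ⊔ W))
  have key : s ∈ B.orthogonal (B.orthogonal (R ⊔ W)) := by
    intro y hy
    rw [dotForm_orthogonal_sup] at hy
    obtain ⟨hyR, hyW⟩ := hy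
    -- y is orthogonal to all rows, so A.mulVec y = 0
    have hAy : A.mulVec y = 0 := by
      funext i
      have := hyR (A i) (Submodule.subset_span ⟨i, rfl⟩)
      simpa [Matrix.mulVec, dotProduct, dotForm_apply, B] using this
    -- y vanishes on E
    have hyE : ∀ i ∈ E, y i = 0 := by
      intro i hi
      have := hyW (Pi.single i 1) (Submodule.subset_span ⟨i, hi, rfl⟩)
      simpa [LinearMap.BilinForm.isOrtho_def, dotForm_apply, Pi.single_apply, Finset.sum_ite_eq', B] using this
    -- x0 + y is in H and agrees with x0 on E
    have hx0y : x0 + y ∈ H := by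
      rw [hH] at hx0 ⊢
      simp only [Set.mem_setOf_eq] at hx0 ⊢
      rw [Matrix.mulVec_add, hx0, hAy, add_zero]
    have hagree : ∀ i ∈ E, (x0 + y) i = x0 i := by
      intro i hi
      simp [hyE i hi]
    have := hcert (x0 + y) hagree
    rw [hf _ hx0y, hf _ hx0] at this
    have hsum : ∑ i, (x0 i + y i) * s i = ∑ i, (x0 i * s i + y i * s i) := by
      apply Finset.sum_congr rfl; intros; ring
    simp only [Pi.add_apply] at this
    rw [hsum, Finset.sum_add_distrib] at this
    exact add_eq_left.mp this
  rw [LinearMap.BilinForm.orthogonal_orthogonal (dotForm_nondeg n) (dotForm_refl n)] at key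
  obtain ⟨v, hv, w, hw, hs⟩ := Submodule.mem_sup.mp key
  refine ⟨v, hv, ?_⟩
  have hvv : v + v = 0 := by
    funext i
    exact CharTwo.add_self_eq_zero _
  have hsv : s + v = w := by
    rw [← hs]
    rw [add_comm v w, add_assoc, hvv, add_zero]
  rw [hsv]
  refine ⟨hw, ?_⟩
  -- w is supported on E
  have hsupp : ∀ j, j ∉ E → w j = 0 := by
    have : ∀ x ∈ W, ∀ j, j ∉ E → x j = 0 := by
      intro x hx
      refine Submodule.span_induction ?_ ?_ ?_ ?_ hx
      · rintro x ⟨i, hi, rfl⟩ j hj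
        have : i ≠ j := fun h => hj (h ▸ hi)
        simp [Pi.single_apply, this.symm]
      · intro j _; rfl
      · intro a b _ _ ha hb j hj
        simp [ha j hj, hb j hj]
      · intro c a _ ha j hj
        simp [ha j hj]
    exact this w hw
  rw [← hE]
  unfold hammingNorm
  apply Finset.card_le_card
  intro j hj
  simp only [Finset.mem_filter, Finset.mem_univ, true_and] at hj
  by_contra hjE
  exact hj (hsupp j hjE)
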